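/- The full subcategory of the category of monoids whose objects are the free monoids is Cauchy-complete: every idempotent endomorphism h : FreeMonoid S → FreeMonoid S (with h ∘ h = h) splits through a free monoid, i.e., there exist a set T and monoid homomorphisms r : FreeMonoid S → FreeMonoid T and u : FreeMonoid T → FreeMonoid S with u ∘ r = h and r ∘ u = id. -/

import Mathlib

open FreeMonoid

namespace FMCauchy

variable {S : Type}

/-- Splitting lemma: if `x * y = a * b` with `a` at most as long as `x`,
then `a` is a prefix of `x`. -/
theorem toList_inj {a b : FreeMonoid S} (hab : a.toList = b.toList) : a = b := by
  rw [← FreeMonoid.ofList_toList a, ← FreeMonoid.ofList_toList b, hab]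

theorem split_of_length_le {x y a b : FreeMonoid S} (hxy : x * y = a * b)
    (hlen : a.length ≤ x.length) : ∃ c, x = a * c ∧ b = c * y := by
  have hl : x.toList ++ y.toList = a.toList ++ b.toList := by
    simpa [FreeMonoid.toList_mul] using congrArg FreeMonoid.toList hxy
  have hx : x.toList = a.toList ++ x.toList.drop a.toList.length := by
    have htake : x.toList.take a.toList.length = a.toList := by
      have h1 : (x.toList ++ y.toList).take a.toList.length = a.toList := by
        rw [hl, List.take_left]
      have h2 : (x.toList ++ y.toList).take a.toList.length
          = x.toList.take a.toList.length :=
        List.take_append_of_le_length hlen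
      rw [← h2, h1]
    conv_lhs => rw [← List.take_append_drop a.toList.length x.toList, htake]
  refine ⟨FreeMonoid.ofList (x.toList.drop a.toList.length), ?_, ?_⟩
  · apply toList_inj
    simpa [FreeMonoid.toList_mul] using hx
  · apply toList_inj
    have : a.toList ++ (x.toList.drop a.toList.length ++ y.toList)
        = a.toList ++ b.toList := by
      rw [← List.append_assoc, ← hx, hl]
    simpa [FreeMonoid.toList_mul] using (List.append_cancel_left this).symm

theorem eq_of_prefix_length_eq {x y a b : FreeMonoid S} (hxy : x * y = a * b)
    (hlen : a.length = x.length) : a = x := by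
  obtain ⟨c, hc1, _⟩ := split_of_length_le hxy hlen.le
  have h2 : x.length = a.length + c.length := by
    rw [hc1, FreeMonoid.length_mul]
  have : c = 1 := FreeMonoid.length_eq_zero.mp (by omega)
  rw [hc1, this, mul_one]

theorem length_decomp {x a b : FreeMonoid S} (hab : x = a * b) :
    x.length = a.length + b.length := by rw [hab, FreeMonoid.length_mul]

theorem mul_eq_one'' {x y : FreeMonoid S} (hxy : x * y = 1) : x = 1 ∧ y = 1 := by
  have hl : x.length + y.length = 0 := by
    have := congrArg FreeMonoid.length hxy
    rwa [FreeMonoid.length_mul, FreeMonoid.length_one] at this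
  exact ⟨FreeMonoid.length_eq_zero.mp (by omega), FreeMonoid.length_eq_zero.mp (by omega)⟩

variable (h : FreeMonoid S →* FreeMonoid S)

/-- The indecomposable fixed points of `h`. -/
abbrev Indec : Type :=
  {x : FreeMonoid S // h x = x ∧ x ≠ 1 ∧
    ∀ a b : FreeMonoid S, h a = a → h b = b → a ≠ 1 → b ≠ 1 → x ≠ a * b}

/-- The predicate for a minimal decomposition of `x`. -/
def DecP (x : FreeMonoid S) : Prop :=
  ∃ a b : FreeMonoid S, a ≠ 1 ∧ h a = a ∧ h b = b ∧ x = a * b ∧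
    ∀ a' b' : FreeMonoid S, a' ≠ 1 → h a' = a' → h b' = b' → x = a' * b' →
      a.length ≤ a'.length

theorem decP_of (x : FreeMonoid S) (hx : h x = x) (hne : x ≠ 1) : DecP h x := by
  classical
  have hex : ∃ k, ∃ a b : FreeMonoid S, a ≠ 1 ∧ h a = a ∧ h b = b ∧ x = a * b ∧
      a.length = k := ⟨x.length, x, 1, hne, hx, map_one h, (mul_one x).symm, rfl⟩
  obtain ⟨a, b, ha1, ha, hb, hab, hal⟩ := Nat.find_spec hex
  refine ⟨a, b, ha1, ha, hb, hab, ?_⟩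
  intro a' b' ha1' ha' hb' hab'
  rw [hal]
  by_contra hlt
  push_neg at hlt
  exact Nat.find_min hex hlt ⟨a', b', ha1', ha', hb', hab', rfl⟩

open Classical in
/-- Pick a minimal decomposition. -/
noncomputable def dec (x : FreeMonoid S) : FreeMonoid S × FreeMonoid S :=
  if hx : DecP h x then (hx.choose, hx.choose_spec.choose) else (1, 1)

theorem dec_spec {x : FreeMonoid S} (hx : h x = x) (hne : x ≠ 1) :
    (dec h x).1 ≠ 1 ∧ h (dec h x).1 = (dec h x).1 ∧ h (dec h x).2 = (dec h x).2 ∧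
      x = (dec h x).1 * (dec h x).2 ∧
      ∀ a' b' : FreeMonoid S, a' ≠ 1 → h a' = a' → h b' = b' → x = a' * b' →
        (dec h x).1.length ≤ a'.length := by
  have hd := decP_of h x hx hne
  classical
  rw [dec, dif_pos hd]
  exact hd.choose_spec.choose_spec

/-- The first component of a minimal decomposition is indecomposable. -/
theorem dec_fst_indec {x : FreeMonoid S} (hx : h x = x) (hne : x ≠ 1) :
    ∀ a b : FreeMonoid S, h a = a → h b = b → a ≠ 1 → b ≠ 1 → (dec h x).1 ≠ a * b := by
  obtain ⟨ha1, ha, hb, hab, hmin⟩ := dec_spec h hx hne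
  intro a b ha' hb' ha1' hb1' heq
  have hcand : x = a * (b * (dec h x).2) := by
    conv_lhs => rw [hab]
    rw [heq, mul_assoc]
  have hbmem : h (b * (dec h x).2) = b * (dec h x).2 := by rw [map_mul, hb', hb]
  have := hmin a (b * (dec h x).2) ha1' ha' hbmem hcand
  have hlen : (dec h x).1.length = a.length + b.length := by
    rw [heq, FreeMonoid.length_mul]
  have hbpos : 0 < b.length := by
    rcases Nat.eq_zero_or_pos b.length with h0 | h0
    · exact absurd (FreeMonoid.length_eq_zero.mp h0) hb1'
    · exact h0
  omega

open Classical in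
/-- Fuel-based factorization into indecomposables. -/
noncomputable def factAux : ℕ → FreeMonoid S → FreeMonoid (Indec h)
  | 0, _ => 1
  | n + 1, x =>
    if hx : h x = x ∧ x ≠ 1 then
      FreeMonoid.of (⟨(dec h x).1,
        (dec_spec h hx.1 hx.2).2.1,
        (dec_spec h hx.1 hx.2).1,
        dec_fst_indec h hx.1 hx.2⟩ : Indec h) * factAux n (dec h x).2
    else 1

theorem factAux_one (n : ℕ) : factAux h n (1 : FreeMonoid S) = 1 := by
  cases n with
  | zero => rfl
  | succ n => rw [factAux, dif_neg]; simp

theorem factAux_not_fix (n : ℕ) {x : FreeMonoid S} (hx : h x ≠ x) :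
    factAux h n x = 1 := by
  cases n with
  | zero => rfl
  | succ n => rw [factAux, dif_neg]; tauto

/-- Fuel independence. -/
theorem factAux_fuel : ∀ n m : ℕ, ∀ x : FreeMonoid S, x.length ≤ n → x.length ≤ m →
    factAux h n x = factAux h m x := by
  intro n
  induction n with
  | zero =>
    intro m x hn _
    have : x = 1 := FreeMonoid.length_eq_zero.mp (Nat.le_zero.mp hn)
    rw [this, factAux_one, factAux_one]
  | succ n ih =>
    intro m x hn hm
    by_cases hx : h x = x ∧ x ≠ 1
    · have hpos : 0 < x.length := by
        rcases Nat.eq_zero_or_pos x.length with h0 | h0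
        · exact absurd (FreeMonoid.length_eq_zero.mp h0) hx.2
        · exact h0
      obtain ⟨m', rfl⟩ : ∃ m', m = m' + 1 := ⟨m - 1, by omega⟩
      rw [factAux, dif_pos hx, factAux, dif_pos hx]
      obtain ⟨ha1, _, _, hab, _⟩ := dec_spec h hx.1 hx.2
      have hlen : x.length = (dec h x).1.length + (dec h x).2.length :=
        length_decomp hab
      have hapos : 0 < (dec h x).1.length := by
        rcases Nat.eq_zero_or_pos (dec h x).1.length with h0 | h0
        · exact absurd (FreeMonoid.length_eq_zero.mp h0) ha1
        · exact h0
      rw [ih m' (dec h x).2 (by omega) (by omega)]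
    · rcases not_and_or.mp hx with hfix | hone
      · rw [factAux_not_fix h _ hfix, factAux_not_fix h _ hfix]
      · push_neg at hone
        rw [hone, factAux_one, factAux_one]

/-- The factorization map. -/
noncomputable def fact (x : FreeMonoid S) : FreeMonoid (Indec h) :=
  factAux h x.length x

theorem fact_one : fact h (1 : FreeMonoid S) = 1 := factAux_one h _

theorem fact_unfold {x : FreeMonoid S} (hx : h x = x) (hne : x ≠ 1) :
    fact h x = FreeMonoid.of (⟨(dec h x).1,
        (dec_spec h hx hne).2.1, (dec_spec h hx hne).1,
        dec_fst_indec h hx hne⟩ : Indec h) * fact h (dec h x).2 := by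
  have hpos : 0 < x.length := by
    rcases Nat.eq_zero_or_pos x.length with h0 | h0
    · exact absurd (FreeMonoid.length_eq_zero.mp h0) hne
    · exact h0
  obtain ⟨n, hn⟩ : ∃ n, x.length = n + 1 := ⟨x.length - 1, by omega⟩
  obtain ⟨ha1, _, _, hab, _⟩ := dec_spec h hx hne
  have hlen : x.length = (dec h x).1.length + (dec h x).2.length :=
    length_decomp hab
  have hapos : 0 < (dec h x).1.length := by
    rcases Nat.eq_zero_or_pos (dec h x).1.length with h0 | h0
    · exact absurd (FreeMonoid.length_eq_zero.mp h0) ha1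
    · exact h0
  rw [fact, hn, factAux, dif_pos ⟨hx, hne⟩, fact,
    factAux_fuel h n (dec h x).2.length (dec h x).2 (by omega) le_rfl]

/-- The embedding map. -/
noncomputable def emb : FreeMonoid (Indec h) →* FreeMonoid S :=
  FreeMonoid.lift (fun t : Indec h => t.1)

theorem emb_fact : ∀ n : ℕ, ∀ x : FreeMonoid S, x.length ≤ n → h x = x →
    emb h (fact h x) = x := by
  intro n
  induction n with
  | zero =>
    intro x hn _
    have : x = 1 := FreeMonoid.length_eq_zero.mp (Nat.le_zero.mp hn)
    rw [this, fact, factAux_one, map_one]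
  | succ n ih =>
    intro x hn hx
    by_cases hne : x = 1
    · rw [hne, fact, factAux_one, map_one]
    · obtain ⟨ha1, _, hb, hab, _⟩ := dec_spec h hx hne
      have hlen : x.length = (dec h x).1.length + (dec h x).2.length :=
        length_decomp hab
      have hapos : 0 < (dec h x).1.length := by
        rcases Nat.eq_zero_or_pos (dec h x).1.length with h0 | h0
        · exact absurd (FreeMonoid.length_eq_zero.mp h0) ha1
        · exact h0
      rw [fact_unfold h hx hne, map_mul, ih (dec h x).2 (by omega) hb]
      simp only [emb, FreeMonoid.lift_eval_of]
      exact hab.symm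

theorem h_fix (hidem : h.comp h = h) (x : FreeMonoid S) : h (h x) = h x :=
  DFunLike.congr_fun hidem x

/-- Stability of the fixed submonoid. -/
theorem stab {a c y : FreeMonoid S} (ha : h a = a) (hy : h y = y)
    (hacy : h (a * c * y) = a * c * y) : h c = c := by
  have : a * h c * y = a * c * y := by
    have := hacy
    rw [map_mul, map_mul, ha, hy] at this
    exact this
  have h1 : a * h c = a * c := mul_right_cancel this
  exact mul_left_cancel h1

/-- Multiplicativity of the factorization on fixed points. -/
theorem fact_mul : ∀ n : ℕ, ∀ x y : FreeMonoid S, (x * y).length ≤ n →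
    h x = x → h y = y → fact h (x * y) = fact h x * fact h y := by
  intro n
  induction n with
  | zero =>
    intro x y hn hx hy
    have hxy : x * y = 1 := FreeMonoid.length_eq_zero.mp (Nat.le_zero.mp hn)
    obtain ⟨hx1, hy1⟩ := mul_eq_one'' hxy
    rw [hx1, hy1, one_mul, fact, factAux_one, one_mul]
  | succ n ih =>
    intro x y hn hx hy
    by_cases hxne : x = 1
    · rw [hxne, one_mul, fact_one, one_mul]
    · have hxy : h (x * y) = x * y := by rw [map_mul, hx, hy]
      have hxyne : x * y ≠ 1 := fun heq => hxne (mul_eq_one'' heq).1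
      -- minimal decompositions of x*y and of x
      obtain ⟨ha1, ha, hb, hab, hmin⟩ := dec_spec h hxy hxyne
      obtain ⟨ha1', ha', hb', hab', hmin'⟩ := dec_spec h hx hxne
      set a := (dec h (x * y)).1 with hadef
      set b := (dec h (x * y)).2 with hbdef
      set a' := (dec h x).1 with ha'def
      set b' := (dec h x).2 with hb'def
      -- a' is a candidate for x*y
      have hcand : x * y = a' * (b' * y) := by rw [hab', mul_assoc]
      have hb'y : h (b' * y) = b' * y := by rw [map_mul, hb', hy]
      have hle : a.length ≤ a'.length := hmin a' (b' * y) ha1' ha' hb'y hcand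
      have hlenx : a'.length ≤ x.length := by
        have := congrArg FreeMonoid.length hab'
        rw [FreeMonoid.length_mul] at this
        omega
      -- a is a prefix of x
      obtain ⟨c, hc1, hc2⟩ := split_of_length_le hab (hle.trans hlenx)
      -- c is fixed, by stability
      have hc : h c = c := by
        apply stab h ha hy
        have : a * c * y = x * y := by rw [← hc1]
        rw [this]
        exact hxy
      -- a is a candidate for x, so a'.length ≤ a.length
      have hge : a'.length ≤ a.length := hmin' a c ha1 ha hc hc1
      have hlena : a.length = a'.length := le_antisymm hle hge
      -- hence a = a'
      have haa' : a = a' :=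
        eq_of_prefix_length_eq (hcand.symm.trans hab) hlena
      have hcb' : c = b' := by
        apply mul_left_cancel (a := a)
        rw [← hc1, haa']
        exact hab'
      have hbb : b = b' * y := by rw [hc2, hcb']
      -- length bound for the inductive hypothesis
      have hapos : 0 < a.length := by
        rcases Nat.eq_zero_or_pos a.length with h0 | h0
        · exact absurd (FreeMonoid.length_eq_zero.mp h0) ha1
        · exact h0
      have hlxy : (x * y).length = a.length + b.length := length_decomp hab
      have hble : (b' * y).length ≤ n := by
        rw [← hbb]; omega
      rw [fact_unfold h hxy hxyne, fact_unfold h hx hxne]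
      have e1 : fact h (dec h (x * y)).2 = fact h b' * fact h y := by
        have h2 : (dec h (x * y)).2 = b' * y := hbb
        rw [h2]
        exact ih b' y hble hb' hy
      rw [e1, ← mul_assoc]
      congr 2
      exact congrArg FreeMonoid.of (Subtype.ext haa')


theorem fact_indec (t : Indec h) : fact h t.1 = FreeMonoid.of t := by
  obtain ⟨ht, hne, hind⟩ := t.2
  obtain ⟨ha1, ha, hb, hab, -⟩ := dec_spec h ht hne
  have hb1 : (dec h t.1).2 = 1 := by
    by_contra hb1
    exact hind (dec h t.1).1 (dec h t.1).2 ha hb ha1 hb1 hab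
  have hat : (dec h t.1).1 = t.1 := by
    rw [hb1, mul_one] at hab
    exact hab.symm
  rw [fact_unfold h ht hne]
  have h2 : fact h (dec h t.1).2 = 1 := by rw [hb1, fact_one]
  rw [h2, mul_one]
  exact congrArg FreeMonoid.of (Subtype.ext hat)

end FMCauchy

theorem freeMonoids_cauchy_complete {S : Type}
    (h : FreeMonoid S →* FreeMonoid S) (hidem : h.comp h = h) :
    ∃ (T : Type) (r : FreeMonoid S →* FreeMonoid T)
      (u : FreeMonoid T →* FreeMonoid S),
      u.comp r = h ∧ r.comp u = MonoidHom.id (FreeMonoid T) := by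
  classical
  refine ⟨FMCauchy.Indec h,
    FreeMonoid.lift (fun s => FMCauchy.fact h (h (FreeMonoid.of s))),
    FMCauchy.emb h, ?_, ?_⟩
  · apply FreeMonoid.hom_eq
    intro s
    simp only [MonoidHom.comp_apply, FreeMonoid.lift_eval_of]
    exact FMCauchy.emb_fact h _ _ le_rfl (FMCauchy.h_fix h hidem _)
  · have r_eq : ∀ w : FreeMonoid S,
        (FreeMonoid.lift (fun s => FMCauchy.fact h (h (FreeMonoid.of s)))) w
          = FMCauchy.fact h (h w) := by
      intro w
      induction w using FreeMonoid.inductionOn' with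
      | one => rw [map_one, map_one, FMCauchy.fact_one]
      | of_mul s w ih =>
        rw [map_mul, FreeMonoid.lift_eval_of, ih, map_mul,
          FMCauchy.fact_mul h _ (h (FreeMonoid.of s)) (h w) le_rfl
            (FMCauchy.h_fix h hidem _) (FMCauchy.h_fix h hidem _)]
    apply FreeMonoid.hom_eq
    intro t
    simp only [MonoidHom.comp_apply, MonoidHom.id_apply]
    rw [show (FMCauchy.emb h) (FreeMonoid.of t) = t.1 from FreeMonoid.lift_eval_of _ t]
    rw [r_eq t.1, t.2.1, FMCauchy.fact_indec h t]
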